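/- Attention leakage lemma: Let q ∈ ℝ^d, keys k_j ∈ ℝ^d and values v_j ∈ ℝ^m for j ∈ {1,…,N}, and let S ⊆ {1,…,N} be nonempty. Set V := max_{1≤j≤N} ‖v_j‖₂, s := ∑_{j∈S} exp(⟨q,k_j⟩), and x := ∑_{j∉S} exp(⟨q,k_j⟩). Then ‖ (∑_{j∈S} exp(⟨q,k_j⟩)·v_j)/s − (∑_{j=1}^{N} exp(⟨q,k_j⟩)·v_j)/(s+x) ‖₂ ≤ 2·V·x/s. -/

import Mathlib

open Matrix Finset

/-- Attention leakage lemma: with `V := max_j ‖v_j‖₂`,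
`s := ∑_{j∈S} exp⟨q,k_j⟩` and `x := ∑_{j∉S} exp⟨q,k_j⟩`, the attention output
restricted to `S` differs from the full attention output by at most
`2·V·x/s` in Euclidean norm. -/
theorem attention_leakage {d m N : ℕ}
    (q : Fin d → ℝ) (k : Fin N → Fin d → ℝ) (v : Fin N → EuclideanSpace ℝ (Fin m))
    (S : Finset (Fin N)) (hS : S.Nonempty)
    (V : ℝ) (hV : IsGreatest (Set.range fun j => ‖v j‖) V)
    (s x : ℝ)
    (hs : s = ∑ j ∈ S, Real.exp (q ⬝ᵥ k j))
    (hx : x = ∑ j ∈ Sᶜ, Real.exp (q ⬝ᵥ k j)) :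
    ‖s⁻¹ • ∑ j ∈ S, Real.exp (q ⬝ᵥ k j) • v j
      - (s + x)⁻¹ • ∑ j, Real.exp (q ⬝ᵥ k j) • v j‖ ≤ 2 * V * x / s := by
  have hV0 : ∀ j, ‖v j‖ ≤ V := fun j => hV.2 ⟨j, rfl⟩
  obtain ⟨j0, hj0⟩ := hS
  have hVnn : 0 ≤ V := le_trans (norm_nonneg _) (hV0 j0)
  have hs' : 0 < s := hs ▸ Finset.sum_pos (fun j _ => Real.exp_pos _) ⟨j0, hj0⟩
  have hx' : 0 ≤ x := hx ▸ Finset.sum_nonneg fun j _ => (Real.exp_pos _).le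
  have hsx : 0 < s + x := by linarith
  set e : Fin N → ℝ := fun j => Real.exp (q ⬝ᵥ k j) with he
  set A := ∑ j ∈ S, e j • v j with hA
  set C := ∑ j ∈ Sᶜ, e j • v j with hC
  have hAC : (∑ j, e j • v j) = A + C := (Finset.sum_add_sum_compl S _).symm
  have hAle : ‖A‖ ≤ s * V := by
    calc ‖A‖ ≤ ∑ j ∈ S, ‖e j • v j‖ := norm_sum_le _ _
    _ ≤ ∑ j ∈ S, e j * V := by
        refine Finset.sum_le_sum fun j _ => ?_
        rw [norm_smul, Real.norm_eq_abs, abs_of_pos (Real.exp_pos _)]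
        exact mul_le_mul_of_nonneg_left (hV0 j) (Real.exp_pos _).le
    _ = s * V := by rw [hs, ← Finset.sum_mul]
  have hCle : ‖C‖ ≤ x * V := by
    calc ‖C‖ ≤ ∑ j ∈ Sᶜ, ‖e j • v j‖ := norm_sum_le _ _
    _ ≤ ∑ j ∈ Sᶜ, e j * V := by
        refine Finset.sum_le_sum fun j _ => ?_
        rw [norm_smul, Real.norm_eq_abs, abs_of_pos (Real.exp_pos _)]
        exact mul_le_mul_of_nonneg_left (hV0 j) (Real.exp_pos _).le
    _ = x * V := by rw [hx, ← Finset.sum_mul]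
  have key : s⁻¹ • A - (s + x)⁻¹ • (A + C)
      = (s⁻¹ - (s + x)⁻¹) • A - (s + x)⁻¹ • C := by
    rw [sub_smul, smul_add]; abel
  have hcoef : 0 ≤ s⁻¹ - (s + x)⁻¹ := by
    have : (s + x)⁻¹ ≤ s⁻¹ := by
      apply inv_anti₀ hs'; linarith
    linarith
  rw [hAC, key]
  have hb : ‖(s⁻¹ - (s + x)⁻¹) • A - (s + x)⁻¹ • C‖
      ≤ (s⁻¹ - (s + x)⁻¹) * (s * V) + (s + x)⁻¹ * (x * V) := by
    refine le_trans (norm_sub_le _ _) (add_le_add ?_ ?_)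
    · rw [norm_smul, Real.norm_eq_abs, abs_of_nonneg hcoef]
      exact mul_le_mul_of_nonneg_left hAle hcoef
    · rw [norm_smul, Real.norm_eq_abs, abs_of_pos (by positivity)]
      exact mul_le_mul_of_nonneg_left hCle (by positivity)
  refine hb.trans ?_
  have hs0 := hs'.ne'
  have hsx0 := hsx.ne'
  calc (s⁻¹ - (s + x)⁻¹) * (s * V) + (s + x)⁻¹ * (x * V)
      = 2 * x * V / (s + x) := by field_simp; ring
    _ ≤ 2 * x * V / s := by gcongr 2 * x * V / ?_ <;> linarith
    _ = 2 * V * x / s := by ring
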